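/- Let G = (V, E) be a finite undirected simple graph and let s ≥ 1 be an integer. If S ⊆ V induces an s-bundle in G, then every subset P ⊆ S also induces an s-bundle in G (the hereditary property of s-bundles). -/
import Mathlib


open Finset

variable {V : Type*} [Fintype V] [DecidableEq V]

/-- `S` induces an `s`-bundle in `G`: for every `T ⊆ S` with `|T| < |S| - s`,
the subgraph of `G` induced on `S \ T` is connected. -/
def IsSBundle (G : SimpleGraph V) (s : ℕ) (S : Finset V) : Prop :=
  ∀ T ⊆ S, (T.card : ℤ) < (S.card : ℤ) - (s : ℤ) →
    (G.induce (↑(S \ T) : Set V)).Connected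

/-- Hereditary property: every subset of an `s`-bundle is an `s`-bundle. -/
theorem sBundle_hereditary (G : SimpleGraph V) (s : ℕ) (hs : 1 ≤ s)
    (S : Finset V) (hS : IsSBundle G s S) :
    ∀ P ⊆ S, IsSBundle G s P := by
  intro P hPS T hTP hcard
  have hTS : T ⊆ S := hTP.trans hPS
  have hset : S \ (T ∪ (S \ P)) = P \ T := by
    ext a
    have h1 := @hPS a
    have h2 := @hTP a
    simp only [mem_sdiff, mem_union, not_or, not_and, not_not]
    tauto
  have hdisj : Disjoint T (S \ P) := by
    exact Finset.disjoint_sdiff.mono_left hTP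
  have hcardu : (T ∪ (S \ P)).card = T.card + (S.card - P.card) := by
    rw [Finset.card_union_of_disjoint hdisj, Finset.card_sdiff_of_subset hPS]
  have hPle : P.card ≤ S.card := Finset.card_le_card hPS
  have hc : ((T ∪ (S \ P)).card : ℤ) < (S.card : ℤ) - (s : ℤ) := by
    rw [hcardu]
    push_cast [hPle]
    omega
  have := hS (T ∪ (S \ P)) (Finset.union_subset hTS Finset.sdiff_subset) hc
  rwa [hset] at this
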